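/- Let i ∈ ℕ and let k > i be an integer; fix a₁,…,a_k ∈ Σ with a_j ≠ a_{j+1} for all 1 ≤ j < k, let S = {a₁,…,a_k}, and let P↗(α), P↘(α) for α ∈ S be the up and down projectors of A[a₁,…,a_k], with P↗(c) = P↘(c) := I for c ∈ Σ∖S. Let w = w₁⋯w_n ∈ L[a₁,…,a_i] ∖ L[a₁,…,a_{i+1}] (where L[a₁,…,a₀] := Σ*). Then for every choice d₁,…,d_n ∈ {↗, ↘} and every integer m with i+2 ≤ m ≤ k+1, the m-th coordinate of e₁ · P_{d₁}(w₁) ⋯ P_{d_n}(w_n) equals 0. -/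
import Mathlib


/-- The "up" orthogonal projector `P↗(α)` of dimension `(k+1)×(k+1)` associated with
the word `as = a₁⋯a_k` and the letter `α`: writing `j₁^{(α)} < ⋯ < j_{#α}^{(α)}` for
the (1-based) positions of `α` in `as`, the entry `(r,s)` is `1` if `r = s` and `r`
belongs to no block `{jᵢ^{(α)}, jᵢ^{(α)}+1}`, `1/2` if `r` and `s` belong to a common
block `{jᵢ^{(α)}, jᵢ^{(α)}+1}`, and `0` otherwise.  (Indices here are 0-based: the
block of a 0-based position `q` with `as.get q = α` is `{q, q+1}`.) -/
noncomputable def upProj {σ : Type} [DecidableEq σ] (as : List σ) (α : σ) :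
    Matrix (Fin (as.length + 1)) (Fin (as.length + 1)) ℝ :=
  Matrix.of fun r s =>
    if ∃ q : Fin as.length, as.get q = α ∧
        (r = q.castSucc ∨ r = q.succ) ∧ (s = q.castSucc ∨ s = q.succ) then 1 / 2
    else if r = s then 1 else 0

/-- The "down" orthogonal projector `P↘(α)` of dimension `(k+1)×(k+1)` associated
with the word `as = a₁⋯a_k` and the letter `α`: the entry `(r,s)` is `1/2` if
`r = s` and `r` belongs to some block `{jᵢ^{(α)}, jᵢ^{(α)}+1}`, `-1/2` if `r ≠ s` and
`r, s` belong to a common block, and `0` otherwise. -/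
noncomputable def downProj {σ : Type} [DecidableEq σ] (as : List σ) (α : σ) :
    Matrix (Fin (as.length + 1)) (Fin (as.length + 1)) ℝ :=
  Matrix.of fun r s =>
    if ∃ q : Fin as.length, as.get q = α ∧
        (r = q.castSucc ∨ r = q.succ) ∧ (s = q.castSucc ∨ s = q.succ) then
      (if r = s then 1 / 2 else -(1 / 2))
    else 0

/-- The first standard basis row vector `e₁ ∈ ℝ^{1×(k+1)}`. -/
noncomputable def e1 {n : ℕ} : Matrix (Fin 1) (Fin (n + 1)) ℝ :=
  Matrix.of fun _ i => if i = 0 then 1 else 0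

/-- The projector associated with a letter `c` and a direction `d`
(`true` = up `↗`, `false` = down `↘`), with `P↗(c) = P↘(c) = I` for letters `c` not
occurring in `as`. -/
noncomputable def dirProj {σ : Type} [DecidableEq σ] (as : List σ) (d : Bool) (c : σ) :
    Matrix (Fin (as.length + 1)) (Fin (as.length + 1)) ℝ :=
  if c ∈ as then (if d then upProj as c else downProj as c) else 1

/-- `e₁ · P_{d₁}(w₁) ⋯ P_{d_n}(w_n)` : the row vector obtained from `e₁` by applying,
for each position `p` of the word `w`, the up or down projector of the letter `w_p`
according to the choice of directions `d`. -/
noncomputable def dirState {σ : Type} [DecidableEq σ] (as : List σ) (w : List σ)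
    (d : Fin w.length → Bool) : Matrix (Fin 1) (Fin (as.length + 1)) ℝ :=
  e1 * (List.ofFn fun p : Fin w.length => dirProj as (d p) (w.get p)).prod

lemma step_lemma {σ : Type} [DecidableEq σ] (as : List σ) (b : Bool) (c : σ)
    (v : Matrix (Fin 1) (Fin (as.length + 1)) ℝ) (m : ℕ)
    (hv : ∀ t : Fin (as.length + 1), m < (t : ℕ) → v 0 t = 0)
    (t : Fin (as.length + 1)) (ht : m < (t : ℕ))
    (hne : ¬ ((t : ℕ) = m + 1 ∧ ∃ h : m < as.length, as.get ⟨m, h⟩ = c)) :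
    (v * dirProj as b c) 0 t = 0 := by
  rw [Matrix.mul_apply]
  apply Finset.sum_eq_zero
  intro r _
  by_cases hr : m < (r : ℕ)
  · rw [hv r hr, zero_mul]
  · push_neg at hr
    have hrt : r ≠ t := fun h => by rw [h] at hr; omega
    have hP : dirProj as b c r t = 0 := by
      unfold dirProj
      by_cases hc : c ∈ as
      · rw [if_pos hc]
        have key : ¬ ∃ q : Fin as.length, as.get q = c ∧
            (r = q.castSucc ∨ r = q.succ) ∧ (t = q.castSucc ∨ t = q.succ) := by
          rintro ⟨q, hq, hrq, htq⟩
          have hrv : (r : ℕ) = (q : ℕ) ∨ (r : ℕ) = (q : ℕ) + 1 := by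
            rcases hrq with h | h
            · left; rw [h]; exact Fin.coe_castSucc q
            · right; rw [h]; exact Fin.val_succ q
          have htv : (t : ℕ) = (q : ℕ) ∨ (t : ℕ) = (q : ℕ) + 1 := by
            rcases htq with h | h
            · left; rw [h]; exact Fin.coe_castSucc q
            · right; rw [h]; exact Fin.val_succ q
          have hrtv : (r : ℕ) ≠ (t : ℕ) := fun h => hrt (Fin.ext h)
          apply hne
          have hqm : (q : ℕ) = m := by omega
          have hm : m < as.length := hqm ▸ q.isLt
          refine ⟨by omega, hm, ?_⟩
          have hq' : (⟨m, hm⟩ : Fin as.length) = q := Fin.ext hqm.symm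
          rw [hq', hq]
        have hup : upProj as c r t = 0 := by
          simp only [upProj, Matrix.of_apply]
          rw [if_neg key, if_neg hrt]
        have hdown : downProj as c r t = 0 := by
          simp only [downProj, Matrix.of_apply]
          rw [if_neg key]
        cases b <;> simp [hup, hdown]
      · rw [if_neg hc]
        exact Matrix.one_apply_ne hrt
    rw [hP, mul_zero]

lemma main_lemma {σ : Type} [DecidableEq σ] (as : List σ) :
    ∀ (wp : List (σ × Bool)) (v : Matrix (Fin 1) (Fin (as.length + 1)) ℝ) (m j : ℕ),
      (∀ t : Fin (as.length + 1), m < (t : ℕ) → v 0 t = 0) →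
      ¬ (((as.drop m).take (j + 1)).Sublist (wp.map Prod.fst)) →
      ∀ t : Fin (as.length + 1), m + j < (t : ℕ) →
        (v * (wp.map fun x => dirProj as x.2 x.1).prod) 0 t = 0 := by
  intro wp
  induction wp with
  | nil =>
    intro v m j hv hns t ht
    simpa using hv t (by omega)
  | cons cb wp' IH =>
    obtain ⟨c, b⟩ := cb
    intro v m j hv hns t ht
    rw [List.map_cons, List.prod_cons, ← Matrix.mul_assoc]
    rw [List.map_cons] at hns
    by_cases hcm : ∃ h : m < as.length, as.get ⟨m, h⟩ = c
    · obtain ⟨hm, hc⟩ := hcm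
      have hdrop : as.drop m = c :: as.drop (m + 1) := by
        rw [List.drop_eq_getElem_cons hm]
        simp only [List.get_eq_getElem] at hc
        rw [hc]
      have hj : j ≠ 0 := by
        intro hj0
        subst hj0
        apply hns
        rw [hdrop, List.take_succ_cons, List.take_zero]
        exact (List.nil_sublist _).cons₂ c
      obtain ⟨j', rfl⟩ : ∃ j', j = j' + 1 := ⟨j - 1, by omega⟩
      have hns' : ¬ (((as.drop (m + 1)).take (j' + 1)).Sublist (wp'.map Prod.fst)) := by
        intro hsub
        apply hns
        rw [hdrop, List.take_succ_cons]
        exact hsub.cons₂ c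
      have hv' : ∀ t : Fin (as.length + 1), m + 1 < (t : ℕ) →
          (v * dirProj as b c) 0 t = 0 := fun t ht' =>
        step_lemma as b c v m hv t (by omega) (by omega)
      exact IH (v * dirProj as b c) (m + 1) j' hv' hns' t (by omega)
    · have hns' : ¬ (((as.drop m).take (j + 1)).Sublist (wp'.map Prod.fst)) :=
        fun hsub => hns (hsub.cons c)
      have hv' : ∀ t : Fin (as.length + 1), m < (t : ℕ) →
          (v * dirProj as b c) 0 t = 0 := fun t ht' =>
        step_lemma as b c v m hv t ht' (fun h => hcm h.2)
      exact IH (v * dirProj as b c) m j hv' hns' t ht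

/-- Let `i ∈ ℕ` and `k > i`; fix `a₁,…,a_k` with `aⱼ ≠ aⱼ₊₁`.  If
`w ∈ L[a₁,…,a_i] ∖ L[a₁,…,a_{i+1}]` (with `L[a₁,…,a₀] = Σ*`), then for every choice
of directions `d₁,…,d_n ∈ {↗,↘}` and every coordinate index `m` with
`i+2 ≤ m ≤ k+1` (1-based; 0-based: `m ≥ i+1`), the `m`-th coordinate of
`e₁ · P_{d₁}(w₁) ⋯ P_{d_n}(w_n)` is `0`. -/
theorem dir_state_vanishing_coordinates
    (σ : Type) [DecidableEq σ] (i : ℕ) (as : List σ) (hik : i < as.length)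
    (hchain : as.Chain' (· ≠ ·)) (w : List σ)
    (hw₁ : (as.take i).Sublist w) (hw₂ : ¬ (as.take (i + 1)).Sublist w) :
    ∀ (d : Fin w.length → Bool) (t : Fin (as.length + 1)),
      i + 1 ≤ (t : ℕ) → dirState as w d 0 t = 0 := by
  intro d t ht
  set wp : List (σ × Bool) := List.ofFn fun p : Fin w.length => (w.get p, d p) with hwp
  have hfst : wp.map Prod.fst = w := by
    rw [hwp, List.map_ofFn]
    exact List.ofFn_get w
  have hmap : wp.map (fun x => dirProj as x.2 x.1)
      = List.ofFn fun p : Fin w.length => dirProj as (d p) (w.get p) := by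
    rw [hwp, List.map_ofFn]
    rfl
  have hv : ∀ s : Fin (as.length + 1), 0 < (s : ℕ) → e1 0 s = 0 := by
    intro s hs
    simp only [e1, Matrix.of_apply]
    rw [if_neg]
    intro h
    rw [h] at hs
    simp at hs
  have hns : ¬ (((as.drop 0).take (i + 1)).Sublist (wp.map Prod.fst)) := by
    rw [hfst, List.drop_zero]
    exact hw₂
  have := main_lemma as wp e1 0 i hv hns t (by omega)
  rw [hmap] at this
  exact this
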